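/- Let p ∈ ℝ and φ₁, φ₂ ∈ ℝ. Define ς = |−e^{iφ₂} − (1 − e^{iφ₁})(1 − e^{iφ₂})·p|² (squared complex modulus). Then 1 − ς = p·κ, where κ = 4(2p − 1)·sin²(φ₁/2)·(cos φ₂ − 1) + 2·sin φ₁·sin φ₂. -/

import Mathlib

open Complex Real

theorem stmt_0 (p φ₁ φ₂ : ℝ) :
    1 - ‖(-(Complex.exp (Complex.I * φ₂)) -
        (1 - Complex.exp (Complex.I * φ₁)) * (1 - Complex.exp (Complex.I * φ₂)) * (p : ℂ))‖ ^ 2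
      = p * (4 * (2 * p - 1) * Real.sin (φ₁ / 2) ^ 2 * (Real.cos φ₂ - 1)
          + 2 * Real.sin φ₁ * Real.sin φ₂) := by
  rw [Complex.sq_norm, Complex.normSq_apply]
  rw [show Complex.I * (φ₁ : ℂ) = (φ₁ : ℂ) * Complex.I from mul_comm _ _,
      show Complex.I * (φ₂ : ℂ) = (φ₂ : ℂ) * Complex.I from mul_comm _ _,
      Complex.exp_mul_I, Complex.exp_mul_I]
  simp [Complex.cos_ofReal_re, Complex.sin_ofReal_re]
  have h2 : Real.sin φ₂ ^ 2 + Real.cos φ₂ ^ 2 = 1 := Real.sin_sq_add_cos_sq φ₂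
  have h1 : Real.sin φ₁ ^ 2 + Real.cos φ₁ ^ 2 = 1 := Real.sin_sq_add_cos_sq φ₁
  have h3 : Real.sin (φ₁ / 2) ^ 2 = (1 - Real.cos φ₁) / 2 := by
    have h := Real.cos_sq (φ₁ / 2)
    rw [show 2 * (φ₁ / 2) = φ₁ by ring] at h
    nlinarith [Real.sin_sq_add_cos_sq (φ₁ / 2)]
  rw [h3]
  linear_combination (-(p^2) - p^2*Real.sin φ₂^2 + 2*p^2*Real.cos φ₂ - p^2*Real.cos φ₂^2) * h1
    + (-1 + 2*p - 2*p*Real.cos φ₁ - 2*p^2 + 2*p^2*Real.cos φ₁) * h2
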